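/- Let A ⊆ Λ²W* be a linear subspace such that every ω ∈ A has rank at most 4. If ω ∈ A has rank exactly 4 (so ker(ω) is a 2-dimensional subspace of W), then every α ∈ A satisfies α(k,k') = 0 for all k, k' ∈ ker(ω). -/

import Mathlib

open Matrix

noncomputable section

abbrev W : Type := Fin 6 → ℂ
abbrev Form : Type := Matrix (Fin 6) (Fin 6) ℂ

/-- The skew-symmetric bilinear form associated to a matrix: `ω(u,v) = uᵀ M v`. -/
def Form.apply (M : Form) (u v : W) : ℂ := u ⬝ᵥ M *ᵥ v

/-- A matrix represents a skew-symmetric (alternating) bilinear form iff `Mᵀ = -M`. -/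
def Form.IsSkew (M : Form) : Prop := Mᵀ = -M

/-- Standard basis vectors of `W` (also used as the dual basis of `W*`). -/
def e (i : Fin 6) : Fin 6 → ℂ := Pi.single i 1

/-- Wedge of two covectors: `(φ∧ψ)(u,u') = φ(u)ψ(u') − ψ(u)φ(u')`. -/
def wedge (φ ψ : Fin 6 → ℂ) : Form := vecMulVec φ ψ - vecMulVec ψ φ

/-- Kernel of the linear map `u ↦ ω(u,·)`, i.e. of `u ↦ Mᵀ u`. -/
def Form.kernel (M : Form) : Submodule ℂ W := LinearMap.ker (Matrix.mulVecLin Mᵀ)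

/-- The action of `g ∈ GL(W)` on forms: `(g·ω)(u,u') = ω(gu,gu')`, as a linear map on forms. -/
def actLin (g : Matrix (Fin 6) (Fin 6) ℂ) : Form →ₗ[ℂ] Form where
  toFun M := gᵀ * M * g
  map_add' M N := by simp [add_mul, mul_add]
  map_smul' c M := by simp [mul_smul_comm, smul_mul_assoc]

/-- The geometric criterion for non-stability (Theorem 2.3(2)). -/
def Nonstable (A : Submodule ℂ Form) : Prop :=
  ∃ s : ℕ, s ∈ ({1, 2, 3} : Set ℕ) ∧
    ∃ U U' : Submodule ℂ W, U ≤ U' ∧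
      Module.finrank ℂ U = s ∧ Module.finrank ℂ U' = 6 - s ∧
      ∀ M ∈ A, ∀ u ∈ U, ∀ u' ∈ U', Form.apply M u u' = 0

/-- The geometric criterion for non-semistability (Theorem 2.3(1)). -/
def NonSemistable (A : Submodule ℂ Form) : Prop :=
  ∃ s : ℕ, s ∈ ({1, 2, 3} : Set ℕ) ∧
    ∃ U U' : Submodule ℂ W, U ≤ U' ∧
      Module.finrank ℂ U = s ∧ Module.finrank ℂ U' = 7 - s ∧
      ∀ M ∈ A, ∀ u ∈ U, ∀ u' ∈ U', Form.apply M u u' = 0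

/-- The plane `π_g` of general type. -/
def pi_g : Submodule ℂ Form :=
  Submodule.span ℂ {wedge (e 0) (e 3) + wedge (e 1) (e 4),
    wedge (e 0) (e 5) + wedge (e 2) (e 4),
    wedge (e 1) (e 5) - wedge (e 2) (e 3)}


lemma apply_eq_lin (M : Form) (u v : W) :
    Form.apply M u v = Matrix.toLinearMap₂' ℂ M u v :=
  (Matrix.toLinearMap₂'_apply' M u v).symm

lemma skew_apply_symm {M : Form} (hM : Form.IsSkew M) (u v : W) :
    Form.apply M u v = - Form.apply M v u := by
  unfold Form.apply
  rw [Matrix.dotProduct_mulVec, ← Matrix.transpose_transpose M, Matrix.vecMul_transpose,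
    Matrix.transpose_transpose, hM, Matrix.neg_mulVec, neg_dotProduct,
    dotProduct_comm]

lemma skew_apply_self {M : Form} (hM : Form.IsSkew M) (u : W) :
    Form.apply M u u = 0 := by
  have h := skew_apply_symm hM u u
  linear_combination h / 2

lemma kernel_apply_left {M : Form} {k : W} (hk : k ∈ Form.kernel M) (v : W) :
    Form.apply M k v = 0 := by
  have hk' : Mᵀ *ᵥ k = 0 := hk
  unfold Form.apply
  rw [Matrix.dotProduct_mulVec, ← Matrix.transpose_transpose M, Matrix.vecMul_transpose,
    hk', zero_dotProduct]

lemma apply_sum_right (M : Form) (u : W) (v : Fin 6 → ℂ) (p : Fin 6 → W) :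
    Form.apply M u (∑ j : Fin 6, v j • p j) = ∑ j : Fin 6, v j * Form.apply M u (p j) := by
  simp [apply_eq_lin, map_sum, _root_.map_smul, smul_eq_mul]

set_option maxRecDepth 8000 in
/-- in a linear system of generic rank ≤ 4, the kernel of a rank-4 member
is isotropic for every member. -/

theorem statement8 (A : Submodule ℂ Form) (hA : ∀ M ∈ A, Form.IsSkew M)
    (hrk : ∀ M ∈ A, Matrix.rank M ≤ 4)
    (ω : Form) (hωA : ω ∈ A) (hωrk : Matrix.rank ω = 4) :
    ∀ α ∈ A, ∀ k ∈ Form.kernel ω, ∀ k' ∈ Form.kernel ω, Form.apply α k k' = 0 := by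
  intro α hαA k hk k' hk'
  by_contra hc
  have hαskew := hA α hαA
  have hωskew := hA ω hωA
  set c := Form.apply α k k' with hcdef
  -- finrank facts
  have hW6 : Module.finrank ℂ (Fin 6 → ℂ) = 6 := by simp
  have hker2 : Module.finrank ℂ (Form.kernel ω) = 2 := by
    have h1 : Module.finrank ℂ (LinearMap.range (Matrix.mulVecLin ωᵀ)) +
        Module.finrank ℂ (Form.kernel ω) = Module.finrank ℂ (Fin 6 → ℂ) :=
      LinearMap.finrank_range_add_finrank_ker (Matrix.mulVecLin ωᵀ)
    have h2 : Module.finrank ℂ (LinearMap.range (Matrix.mulVecLin ωᵀ)) = 4 := by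
      have h3 : Matrix.rank ωᵀ = 4 := by rw [Matrix.rank_transpose, hωrk]
      exact h3
    rw [h2, hW6] at h1
    omega
  -- linear independence of k, k'
  have hind : LinearIndependent ℂ ![k, k'] := by
    rw [LinearIndependent.pair_iff]
    intro s t hst
    have e0 : Form.apply α 0 k' = 0 := by simp [Form.apply]
    have e0' : Form.apply α k 0 = 0 := by simp [Form.apply]
    have e1 : s * c = 0 := by
      rw [← hst] at e0
      rw [apply_eq_lin] at e0
      simp only [map_add, _root_.map_smul, LinearMap.add_apply, LinearMap.smul_apply,
        smul_eq_mul] at e0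
      rw [← apply_eq_lin, ← apply_eq_lin, skew_apply_self hαskew, ← hcdef] at e0
      linear_combination e0
    have e2 : t * c = 0 := by
      rw [← hst] at e0'
      rw [apply_eq_lin] at e0'
      simp only [map_add, _root_.map_smul, smul_eq_mul] at e0'
      rw [← apply_eq_lin, ← apply_eq_lin, skew_apply_self hαskew, ← hcdef] at e0'
      linear_combination e0'
    exact ⟨(mul_eq_zero.mp e1).resolve_right hc, (mul_eq_zero.mp e2).resolve_right hc⟩
  -- S = span {k, k'} = ker ω
  set S := Submodule.span ℂ (Set.range ![k, k']) with hSdef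
  have hSle : S ≤ Form.kernel ω := by
    rw [hSdef, Submodule.span_le]
    rintro x ⟨i, rfl⟩
    fin_cases i
    · exact hk
    · exact hk'
  have hS2 : Module.finrank ℂ S = 2 := by
    rw [hSdef]
    simpa using finrank_span_eq_card hind
  have hSeq : S = Form.kernel ω :=
    Submodule.eq_of_le_of_finrank_eq hSle (by rw [hS2, hker2])
  obtain ⟨U, hU⟩ := Submodule.exists_isCompl S
  have hU4 : Module.finrank ℂ U = 4 := by
    have h := Submodule.finrank_add_eq_of_isCompl hU
    rw [hS2] at h
    have hW6' : Module.finrank ℂ W = 6 := by simp [Module.finrank_pi]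
    omega
  set bU : Module.Basis (Fin 4) ℂ U := Module.finBasisOfFinrankEq ℂ U hU4 with hbU
  set p : Fin 6 → W := ![k, k', (bU 0 : W), (bU 1 : W), (bU 2 : W), (bU 3 : W)] with hpdef
  have hUspan : U = Submodule.span ℂ (Set.range (fun b : Fin 4 => (bU b : W))) := by
    conv_lhs => rw [← Submodule.map_subtype_top U, ← bU.span_eq]
    rw [Submodule.map_span]
    congr 1
    ext x
    simp [Set.range_comp]
  have hspan : Submodule.span ℂ (Set.range p) = ⊤ := by
    rw [eq_top_iff, ← hU.sup_eq_top]
    apply sup_le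
    · rw [hSdef, Submodule.span_le]
      rintro x ⟨i, rfl⟩
      fin_cases i
      · exact Submodule.subset_span ⟨0, rfl⟩
      · exact Submodule.subset_span ⟨1, rfl⟩
    · rw [hUspan, Submodule.span_le]
      rintro x ⟨b, rfl⟩
      fin_cases b
      · exact Submodule.subset_span ⟨2, rfl⟩
      · exact Submodule.subset_span ⟨3, rfl⟩
      · exact Submodule.subset_span ⟨4, rfl⟩
      · exact Submodule.subset_span ⟨5, rfl⟩
  -- Gram matrices
  set P : Form := Matrix.of (fun i j => p j i) with hPdef
  have hPG : ∀ M : Form, Pᵀ * M * P = Matrix.of (fun i j => Form.apply M (p i) (p j)) := by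
    intro M
    ext i j
    simp only [Matrix.mul_apply, Matrix.transpose_apply, Matrix.of_apply, Form.apply,
      dotProduct, Matrix.mulVec, Finset.sum_mul, hPdef, Matrix.of_apply]
    rw [Finset.sum_comm]
    apply Finset.sum_congr rfl
    intro a _
    rw [Finset.mul_sum]
    apply Finset.sum_congr rfl
    intro b _
    ring
  set N : Form := Matrix.of (fun i j => Form.apply ω (p i) (p j)) with hNdef
  set B : Form := Matrix.of (fun i j => Form.apply α (p i) (p j)) with hBdef
  have hdetG : ∀ t : ℂ, (N + t • B).det = 0 := by
    intro t
    have hmem : ω + t • α ∈ A := A.add_mem hωA (A.smul_mem t hαA)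
    have hNB : N + t • B = Pᵀ * (ω + t • α) * P := by
      rw [hPG]
      ext i j
      simp [hNdef, hBdef, Form.apply, Matrix.add_mulVec, Matrix.smul_mulVec,
        dotProduct_add, dotProduct_smul, smul_eq_mul]
    by_contra hdet
    have hunit : IsUnit (N + t • B) := (Matrix.isUnit_iff_isUnit_det _).mpr
      (isUnit_iff_ne_zero.mpr hdet)
    have h6 : Matrix.rank (N + t • B) = 6 := by
      simpa using Matrix.rank_of_isUnit _ hunit
    have h4 : Matrix.rank (N + t • B) ≤ 4 := by
      rw [hNB]
      calc Matrix.rank (Pᵀ * (ω + t • α) * P) ≤ Matrix.rank (Pᵀ * (ω + t • α)) :=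
            Matrix.rank_mul_le_left _ _
        _ ≤ Matrix.rank (ω + t • α) := Matrix.rank_mul_le_right _ _
        _ ≤ 4 := hrk _ hmem
    omega
  -- rows 0,1 of N vanish
  have hp0 : p 0 = k := rfl
  have hp1 : p 1 = k' := rfl
  have hN0 : ∀ j, N 0 j = 0 := fun j => by
    show Form.apply ω (p 0) (p j) = 0
    rw [hp0]; exact kernel_apply_left hk _
  have hN1 : ∀ j, N 1 j = 0 := fun j => by
    show Form.apply ω (p 1) (p j) = 0
    rw [hp1]; exact kernel_apply_left hk' _
  -- polynomial matrix
  obtain ⟨Mp, hMpdef⟩ : ∃ Mp : Matrix (Fin 6) (Fin 6) (Polynomial ℂ), Mp = Matrix.of (fun (i j : Fin 6) =>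
      if (i : ℕ) < 2 then Polynomial.C (B i j)
      else Polynomial.C (N i j) + Polynomial.X * Polynomial.C (B i j)) := ⟨_, rfl⟩
  have hroot : ∀ t : ℂ, t ≠ 0 → Mp.det.eval t = 0 := by
    intro t ht
    have h1 : ((Polynomial.evalRingHom t).mapMatrix Mp) = Matrix.of (fun (i j : Fin 6) =>
        if (i : ℕ) < 2 then B i j else N i j + t * B i j) := by
      ext i j
      by_cases h : (i : ℕ) ≤ 1 <;> simp [hMpdef, h] <;> ring
    have h2 : Matrix.diagonal (fun i : Fin 6 => if (i : ℕ) < 2 then t else 1) *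
        Matrix.of (fun (i j : Fin 6) => if (i : ℕ) < 2 then B i j else N i j + t * B i j)
        = N + t • B := by
      ext i j
      rw [Matrix.diagonal_mul]
      by_cases h : (i : ℕ) < 2
      · have hi : i = 0 ∨ i = 1 := by omega
        rcases hi with rfl | rfl
        · simp [h, hN0 j]
        · simp [h, hN1 j]
      · simp only [Matrix.of_apply, if_neg h, Matrix.add_apply, Matrix.smul_apply, smul_eq_mul, one_mul]
    have h3 : Polynomial.eval t Mp.det = (Matrix.of (fun (i j : Fin 6) =>
        if (i : ℕ) < 2 then B i j else N i j + t * B i j)).det := by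
      have hh := RingHom.map_det (Polynomial.evalRingHom t) Mp
      rw [Polynomial.coe_evalRingHom] at hh
      rw [hh, h1]
    have hprod : (∏ i : Fin 6, (if (i : ℕ) < 2 then t else 1)) = t * t := by
      rw [Fin.prod_univ_six]
      norm_num [show ((0 : Fin 6) : ℕ) = 0 from rfl, show ((1 : Fin 6) : ℕ) = 1 from rfl,
        show ((2 : Fin 6) : ℕ) = 2 from rfl, show ((3 : Fin 6) : ℕ) = 3 from rfl,
        show ((4 : Fin 6) : ℕ) = 4 from rfl, show ((5 : Fin 6) : ℕ) = 5 from rfl]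
    have h4 : (t * t) * (Matrix.of (fun (i j : Fin 6) =>
        if (i : ℕ) < 2 then B i j else N i j + t * B i j)).det = 0 := by
      rw [← hprod, ← Matrix.det_diagonal, ← Matrix.det_mul, h2, hdetG t]
    rw [h3]
    rcases mul_eq_zero.mp h4 with h | h
    · exact absurd (by rcases mul_eq_zero.mp h with h' | h' <;> exact h') ht
    · exact h
  have hMp0 : Mp.det = 0 := by
    apply Polynomial.eq_zero_of_infinite_isRoot
    apply Set.Infinite.mono (s := {(0 : ℂ)}ᶜ)
    · intro t ht
      exact hroot t ht
    · exact Set.Finite.infinite_compl (Set.finite_singleton 0)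
  obtain ⟨M0, hM0def⟩ : ∃ M0 : Form, M0 = Matrix.of (fun (i j : Fin 6) =>
      if (i : ℕ) < 2 then B i j else N i j) := ⟨_, rfl⟩
  have hM0det : M0.det = 0 := by
    have h1 : ((Polynomial.evalRingHom 0).mapMatrix Mp) = M0 := by
      ext i j
      by_cases h : (i : ℕ) ≤ 1 <;> simp [hMpdef, hM0def, h]
    have hh := RingHom.map_det (Polynomial.evalRingHom 0) Mp
    rw [h1] at hh
    rw [Polynomial.coe_evalRingHom] at hh
    rw [hMp0] at hh
    simpa using hh.symm
  obtain ⟨v, hvne, hveq⟩ := Matrix.exists_mulVec_eq_zero_iff.mpr hM0det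
  set z : W := ∑ j : Fin 6, v j • p j with hzdef
  have hz : ∀ i : Fin 6, Form.apply ω (p i) z = 0 := by
    intro i
    by_cases h : (i : ℕ) < 2
    · have hpker : p i ∈ Form.kernel ω := by
        have hi : i = 0 ∨ i = 1 := by omega
        rcases hi with rfl | rfl
        · rw [hp0]; exact hk
        · rw [hp1]; exact hk'
      exact kernel_apply_left hpker z
    · rw [hzdef, apply_sum_right]
      have hstep : ∑ j : Fin 6, v j * Form.apply ω (p i) (p j) = ∑ j : Fin 6, M0 i j * v j := by
        apply Finset.sum_congr rfl
        intro j _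
        rw [hM0def]
        simp only [Matrix.of_apply, if_neg h]
        rw [hNdef]
        simp only [Matrix.of_apply]
        ring
      rw [hstep]
      have hrow := congrFun hveq i
      simpa [Matrix.mulVec, dotProduct] using hrow
  -- the linear functional w ↦ w ⬝ᵥ (ω *ᵥ z) vanishes
  have hmv : ω *ᵥ z = 0 := by
    let L : W →ₗ[ℂ] ℂ :=
      { toFun := fun w => w ⬝ᵥ (ω *ᵥ z)
        map_add' := fun a b => add_dotProduct a b _
        map_smul' := fun c a => smul_dotProduct c a _ }
    have hL : Submodule.span ℂ (Set.range p) ≤ LinearMap.ker L := by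
      rw [Submodule.span_le]
      rintro x ⟨i, rfl⟩
      exact hz i
    rw [hspan] at hL
    funext j
    have hLj : L (Pi.single j 1) = 0 := hL Submodule.mem_top
    simpa [L, single_dotProduct] using hLj
  have hzker : z ∈ Form.kernel ω := by
    show Matrix.mulVecLin ωᵀ z = 0
    rw [Matrix.mulVecLin_apply, hωskew, Matrix.neg_mulVec, hmv, neg_zero]
  have hzsum : z = (v 0 • k + v 1 • k') +
      (v 2 • ((bU 0 : W)) + v 3 • ((bU 1 : W)) + v 4 • ((bU 2 : W)) + v 5 • ((bU 3 : W))) := by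
    rw [hzdef, Fin.sum_univ_six, hpdef]
    simp only [Matrix.cons_val_zero, Matrix.cons_val_one, Matrix.head_cons,
      Matrix.cons_val_two, Matrix.tail_cons, Matrix.cons_val_three, Matrix.cons_val_four,
      Matrix.cons_val_fin_one]
    abel
  have h1S : v 0 • k + v 1 • k' ∈ Form.kernel ω :=
    Submodule.add_mem _ (Submodule.smul_mem _ _ hk) (Submodule.smul_mem _ _ hk')
  have huuS : v 2 • ((bU 0 : W)) + v 3 • ((bU 1 : W)) + v 4 • ((bU 2 : W)) + v 5 • ((bU 3 : W)) ∈ S := by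
    rw [hSeq]
    have h2 : v 2 • ((bU 0 : W)) + v 3 • ((bU 1 : W)) + v 4 • ((bU 2 : W)) + v 5 • ((bU 3 : W))
        = z - (v 0 • k + v 1 • k') := by rw [hzsum]; abel
    rw [h2]
    exact Submodule.sub_mem _ hzker h1S
  have huuU : v 2 • ((bU 0 : W)) + v 3 • ((bU 1 : W)) + v 4 • ((bU 2 : W)) + v 5 • ((bU 3 : W)) ∈ U := by
    refine Submodule.add_mem _ (Submodule.add_mem _ (Submodule.add_mem _ ?_ ?_) ?_) ?_ <;>
      exact Submodule.smul_mem _ _ (SetLike.coe_mem _)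
  have huu0 : v 2 • ((bU 0 : W)) + v 3 • ((bU 1 : W)) + v 4 • ((bU 2 : W)) + v 5 • ((bU 3 : W)) = 0 :=
    (Submodule.disjoint_def.mp hU.disjoint) _ huuS huuU
  have hcoeff : ∀ i : Fin 4, ![v 2, v 3, v 4, v 5] i = 0 := by
    apply Fintype.linearIndependent_iff.mp bU.linearIndependent
    rw [Fin.sum_univ_four]
    apply Subtype.coe_injective
    simp only [Submodule.coe_add, SetLike.val_smul, ZeroMemClass.coe_zero,
      Matrix.cons_val_zero, Matrix.cons_val_one, Matrix.head_cons, Matrix.cons_val_two,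
      Matrix.tail_cons, Matrix.cons_val_three]
    exact huu0
  have h2z : v 2 = 0 := hcoeff 0
  have h3z : v 3 = 0 := hcoeff 1
  have h4z : v 4 = 0 := hcoeff 2
  have h5z : v 5 = 0 := hcoeff 3
  -- entries of B
  have hB00 : B 0 0 = 0 := by
    show Form.apply α (p 0) (p 0) = 0
    rw [hp0]; exact skew_apply_self hαskew k
  have hB01 : B 0 1 = c := by
    show Form.apply α (p 0) (p 1) = c
    rw [hp0, hp1]
  have hB10 : B 1 0 = -c := by
    show Form.apply α (p 1) (p 0) = -c
    rw [hp0, hp1]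
    rw [skew_apply_symm hαskew k' k]
  have hB11 : B 1 1 = 0 := by
    show Form.apply α (p 1) (p 1) = 0
    rw [hp1]; exact skew_apply_self hαskew k'
  -- row 0 gives v 1 = 0
  have hrow0 := congrFun hveq 0
  have hrow1 := congrFun hveq 1
  rw [hM0def] at hrow0 hrow1
  simp only [Matrix.mulVec, dotProduct, Matrix.of_apply, Pi.zero_apply] at hrow0 hrow1
  rw [Fin.sum_univ_six] at hrow0 hrow1
  norm_num [hB00, hB01, hB10, hB11, h2z, h3z, h4z, h5z] at hrow0 hrow1
  -- hrow0 : c * v 1 = 0, hrow1 : -c * v 0 = 0 (in some form)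
  have hv1 : v 1 = 0 := hrow0.resolve_left hc
  have hv0' : v 0 = 0 := hrow1.resolve_left hc
  apply hvne
  funext i
  fin_cases i
  · exact hv0'
  · exact hv1
  · exact h2z
  · exact h3z
  · exact h4z
  · exact h5z
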